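/- arXiv:2410.02882 — 2 statements merged into one kernel-verified Lean document; each statement's English description precedes it below -/
import Mathlib

section
/- Let ρ, σ ∈ ℂ^{n×n} be Hermitian positive semidefinite matrices. Then (tr(√(√ρ · σ · √ρ)))² ≤ tr(ρ) · tr(σ). -/
open Matrix ComplexOrder

/-- The positive semidefinite square root of a positive semidefinite matrix, as defined in
Mathlib of December 2024 (since removed from Mathlib). -/
noncomputable def Matrix.PosSemidef.sqrt {m : Type*} [Fintype m] [DecidableEq m]
    {A : Matrix m m ℂ} (hA : A.PosSemidef) : Matrix m m ℂ :=
  hA.1.eigenvectorUnitary.1 * diagonal ((↑) ∘ (√·) ∘ hA.1.eigenvalues) *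
    (star hA.1.eigenvectorUnitary : Matrix m m ℂ)

lemma Matrix.PosSemidef.posSemidef_sqrt {m : Type*} [Fintype m] [DecidableEq m]
    {A : Matrix m m ℂ} (hA : A.PosSemidef) : hA.sqrt.PosSemidef := by
  unfold Matrix.PosSemidef.sqrt
  have hd : (diagonal ((↑) ∘ (√·) ∘ hA.1.eigenvalues) : Matrix m m ℂ).PosSemidef := by
    rw [posSemidef_diagonal_iff]
    intro i
    simp only [Function.comp_apply]
    exact_mod_cast Real.sqrt_nonneg _
  have := hd.mul_mul_conjTranspose_same (hA.1.eigenvectorUnitary : Matrix m m ℂ)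
  rw [← Matrix.star_eq_conjTranspose] at this
  exact this

lemma Matrix.PosSemidef.sqrt_mul_self {m : Type*} [Fintype m] [DecidableEq m]
    {A : Matrix m m ℂ} (hA : A.PosSemidef) : hA.sqrt * hA.sqrt = A := by
  conv_rhs => rw [hA.1.spectral_theorem]
  rw [Unitary.conjStarAlgAut_apply]
  unfold Matrix.PosSemidef.sqrt
  have hU : (star hA.1.eigenvectorUnitary : Matrix m m ℂ) * hA.1.eigenvectorUnitary.1 = 1 :=
    Unitary.coe_star_mul_self _
  calc _ = hA.1.eigenvectorUnitary.1 * diagonal ((↑) ∘ (√·) ∘ hA.1.eigenvalues) *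
        ((star hA.1.eigenvectorUnitary : Matrix m m ℂ) * hA.1.eigenvectorUnitary.1) *
        diagonal ((↑) ∘ (√·) ∘ hA.1.eigenvalues) *
        (star hA.1.eigenvectorUnitary : Matrix m m ℂ) := by simp only [Matrix.mul_assoc]
    _ = _ := by
      rw [hU, Matrix.mul_one, Matrix.mul_assoc _ (diagonal _) (diagonal _), diagonal_mul_diagonal]
      congr 3
      funext i
      simp only [Function.comp_apply]
      rw [← Complex.ofReal_mul, Real.mul_self_sqrt (hA.eigenvalues_nonneg i)]
      rfl

variable {n : ℕ}

lemma aux_star_dot_self (x : Fin n → ℂ) :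
    star x ⬝ᵥ x = ((∑ k, ‖x k‖ ^ 2 : ℝ) : ℂ) := by
  push_cast
  simp only [dotProduct, Pi.star_apply, RCLike.star_def]
  congr 1; funext k
  rw [← Complex.normSq_eq_conj_mul_self, ← Complex.sq_norm]
  push_cast; ring

lemma aux_trace_nonneg {M : Matrix (Fin n) (Fin n) ℂ} (hM : M.PosSemidef) :
    0 ≤ M.trace := by
  rw [Matrix.trace]
  apply Finset.sum_nonneg
  intro i _
  exact hM.diag_nonneg

lemma aux_herm_move {S : Matrix (Fin n) (Fin n) ℂ} (hS : S.IsHermitian)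
    (x y : Fin n → ℂ) : star (S *ᵥ x) ⬝ᵥ y = star x ⬝ᵥ (S *ᵥ y) := by
  rw [star_mulVec, ← Matrix.dotProduct_mulVec, hS]

lemma aux_sum_quad (M : Matrix (Fin n) (Fin n) ℂ) (x : Fin n → Fin n → ℂ) :
    ∑ i, star (x i) ⬝ᵥ (M *ᵥ x i)
      = ((Matrix.of fun k i => x i k)ᴴ * M * (Matrix.of fun k i => x i k)).trace := by
  simp only [Matrix.trace, Matrix.diag, Matrix.mul_apply, Matrix.conjTranspose_apply,
    Matrix.of_apply, dotProduct, Matrix.mulVec, Pi.star_apply, Finset.mul_sum, Finset.sum_mul]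
  refine Finset.sum_congr rfl fun i _ => ?_
  rw [Finset.sum_comm]
  refine Finset.sum_congr rfl fun k _ => Finset.sum_congr rfl fun l _ => ?_
  ring

/-- Let `ρ, σ ∈ ℂ^{n×n}` be Hermitian positive semidefinite matrices.
Then `(tr √(√ρ σ √ρ))² ≤ tr ρ · tr σ`. -/
theorem sq_trace_sqrt_le_trace_mul_trace {n : ℕ}
    (ρ σ : Matrix (Fin n) (Fin n) ℂ)
    (hρ : ρ.PosSemidef) (hσ : σ.PosSemidef)
    (h : (hρ.sqrt * σ * hρ.sqrt).PosSemidef) :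
    (h.sqrt.trace) ^ 2 ≤ ρ.trace * σ.trace := by
  classical
  set A := hρ.sqrt * σ * hρ.sqrt with hAdef
  set μ : Fin n → ℝ := h.1.eigenvalues with hμdef
  have hμ0 : ∀ i, 0 ≤ μ i := h.eigenvalues_nonneg
  set u : Fin n → (Fin n → ℂ) := fun i => ⇑(h.1.eigenvectorBasis i) with hudef
  -- orthonormality of eigenvectors
  have huu : ∀ i j, star (u i) ⬝ᵥ u j = if i = j then 1 else 0 := by
    intro i j
    have := orthonormal_iff_ite.mp h.1.eigenvectorBasis.orthonormal i j
    rw [← this]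
    simp [EuclideanSpace.inner_eq_star_dotProduct, hudef, dotProduct, mul_comm]
  -- eigenvector equation
  have hAu : ∀ j, A *ᵥ u j = (μ j : ℂ) • u j := by
    intro j
    have := h.1.mulVec_eigenvectorBasis j
    rw [hudef, this, RCLike.real_smul_eq_coe_smul (K := ℂ)]
    rfl
  -- trace of sqrt
  have htr : h.sqrt.trace = ((∑ i, Real.sqrt (μ i) : ℝ) : ℂ) := by
    rw [Matrix.PosSemidef.sqrt, Matrix.trace_mul_cycle,
      Unitary.coe_star_mul_self, Matrix.one_mul, Matrix.trace_diagonal]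
    push_cast; rfl
  set B : Matrix (Fin n) (Fin n) ℂ := hσ.sqrt * hρ.sqrt with hBdef
  have hBB : Bᴴ * B = A := by
    rw [hBdef, Matrix.conjTranspose_mul, hσ.posSemidef_sqrt.1, hρ.posSemidef_sqrt.1]
    calc hρ.sqrt * hσ.sqrt * (hσ.sqrt * hρ.sqrt)
        = hρ.sqrt * (hσ.sqrt * hσ.sqrt) * hρ.sqrt := by simp only [Matrix.mul_assoc]
      _ = A := by rw [hσ.sqrt_mul_self]
  set v : Fin n → (Fin n → ℂ) := fun i => B *ᵥ u i with hvdef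
  have hvv : ∀ i j, star (v i) ⬝ᵥ v j = if i = j then (μ i : ℂ) else 0 := by
    intro i j
    rw [hvdef]
    simp only
    rw [star_mulVec, Matrix.dotProduct_mulVec, Matrix.vecMul_vecMul,
      ← Matrix.dotProduct_mulVec, hBB, hAu j, dotProduct_smul, huu i j]
    simp only [smul_eq_mul, mul_ite, mul_one, mul_zero]
    split
    · next heq => rw [heq]
    · rfl
  set c : Fin n → ℝ := fun i => if μ i = 0 then 0 else (Real.sqrt (μ i))⁻¹ with hcdef
  set w : Fin n → (Fin n → ℂ) := fun i => (c i : ℂ) • v i with hwdef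
  have hw0 : ∀ i, μ i = 0 → w i = 0 := by
    intro i hi
    rw [hwdef]; simp [hcdef, hi]
  have hwv : ∀ i, star (w i) ⬝ᵥ v i = ((Real.sqrt (μ i) : ℝ) : ℂ) := by
    intro i
    rw [hwdef]
    simp only [star_smul, smul_dotProduct, hvv i i, if_pos rfl, smul_eq_mul, star_trivial,
      RCLike.star_def, Complex.conj_ofReal]
    by_cases hi : μ i = 0
    · simp [hcdef, hi]
    · rw [hcdef]
      simp only [if_neg hi]
      rw [show ((μ i : ℝ) : ℂ) = ((Real.sqrt (μ i) : ℝ) : ℂ) * ((Real.sqrt (μ i) : ℝ) : ℂ) by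
        exact_mod_cast (Real.mul_self_sqrt (hμ0 i)).symm]
      have hs : ((Real.sqrt (μ i) : ℝ) : ℂ) ≠ 0 := by
        norm_cast
        exact (Real.sqrt_pos.mpr (lt_of_le_of_ne (hμ0 i) (Ne.symm hi))).ne'
      simp only [if_true]
      push_cast
      field_simp
  set p : Fin n → (Fin n → ℂ) := fun i => hσ.sqrt *ᵥ w i with hpdef
  set q : Fin n → (Fin n → ℂ) := fun i => hρ.sqrt *ᵥ u i with hqdef
  have hpq : ∀ i, star (p i) ⬝ᵥ q i = ((Real.sqrt (μ i) : ℝ) : ℂ) := by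
    intro i
    rw [hpdef, hqdef]
    simp only
    rw [aux_herm_move hσ.posSemidef_sqrt.1, Matrix.mulVec_mulVec, ← hBdef]
    exact hwv i
  have habs : ∀ i, Real.sqrt (μ i) ≤ ∑ k, ‖p i k‖ * ‖q i k‖ := by
    intro i
    have h1 : Real.sqrt (μ i) = ‖star (p i) ⬝ᵥ q i‖ := by
      rw [hpq i, Complex.norm_real, Real.norm_of_nonneg (Real.sqrt_nonneg _)]
    rw [h1, dotProduct]
    refine (norm_sum_le _ _).trans (le_of_eq ?_)
    refine Finset.sum_congr rfl fun k _ => ?_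
    simp [norm_mul, Complex.norm_conj]
  set Sp : ℝ := ∑ i, ∑ k, ‖p i k‖ ^ 2 with hSpdef
  set Sq : ℝ := ∑ i, ∑ k, ‖q i k‖ ^ 2 with hSqdef
  have hSq0 : 0 ≤ Sq := Finset.sum_nonneg fun i _ =>
    Finset.sum_nonneg fun k _ => sq_nonneg _
  have hCS : (∑ i, Real.sqrt (μ i)) ^ 2 ≤ Sp * Sq := by
    have h1 : ∑ i, Real.sqrt (μ i) ≤ ∑ i, ∑ k, ‖p i k‖ * ‖q i k‖ :=
      Finset.sum_le_sum fun i _ => habs i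
    have h2 := Finset.sum_mul_sq_le_sq_mul_sq Finset.univ
      (fun ik : Fin n × Fin n => ‖p ik.1 ik.2‖)
      (fun ik : Fin n × Fin n => ‖q ik.1 ik.2‖)
    rw [Fintype.sum_prod_type, Fintype.sum_prod_type, Fintype.sum_prod_type] at h2
    refine le_trans ?_ h2
    have ht0 : 0 ≤ ∑ i, Real.sqrt (μ i) :=
      Finset.sum_nonneg fun i _ => Real.sqrt_nonneg _
    exact pow_le_pow_left₀ ht0 h1 2
  -- the ρ side
  have hUc : (Matrix.of fun k i => u i k) = (h.1.eigenvectorUnitary : Matrix (Fin n) (Fin n) ℂ) := by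
    ext k i
    simp [hudef, Matrix.IsHermitian.eigenvectorUnitary_apply]
  have hTq : ((Sq : ℝ) : ℂ) = ρ.trace := by
    have e1 : ∀ i, ((∑ k, ‖q i k‖ ^ 2 : ℝ) : ℂ) = star (u i) ⬝ᵥ (ρ *ᵥ u i) := by
      intro i
      rw [← aux_star_dot_self, hqdef]
      simp only
      rw [aux_herm_move hρ.posSemidef_sqrt.1, Matrix.mulVec_mulVec, hρ.sqrt_mul_self]
    rw [hSqdef, Complex.ofReal_sum]
    calc (∑ i, ((∑ k, ‖q i k‖ ^ 2 : ℝ) : ℂ))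
        = ∑ i, star (u i) ⬝ᵥ (ρ *ᵥ u i) := Finset.sum_congr rfl fun i _ => e1 i
      _ = ρ.trace := by
          rw [aux_sum_quad, hUc, Matrix.trace_mul_cycle, ← Matrix.star_eq_conjTranspose,
            Matrix.mem_unitaryGroup_iff.mp h.1.eigenvectorUnitary.2, Matrix.one_mul]
  -- the σ side
  set W : Matrix (Fin n) (Fin n) ℂ := Matrix.of (fun k i => w i k) with hWdef
  have hTp : ((Sp : ℝ) : ℂ) = (Wᴴ * σ * W).trace := by
    have e1 : ∀ i, ((∑ k, ‖p i k‖ ^ 2 : ℝ) : ℂ) = star (w i) ⬝ᵥ (σ *ᵥ w i) := by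
      intro i
      rw [← aux_star_dot_self, hpdef]
      simp only
      rw [aux_herm_move hσ.posSemidef_sqrt.1, Matrix.mulVec_mulVec, hσ.sqrt_mul_self]
    rw [hSpdef, Complex.ofReal_sum]
    calc (∑ i, ((∑ k, ‖p i k‖ ^ 2 : ℝ) : ℂ))
        = ∑ i, star (w i) ⬝ᵥ (σ *ᵥ w i) := Finset.sum_congr rfl fun i _ => e1 i
      _ = (Wᴴ * σ * W).trace := aux_sum_quad σ w
  set P : Matrix (Fin n) (Fin n) ℂ := W * Wᴴ with hPdef
  have hWW : Wᴴ * W = Matrix.diagonal (fun i => if μ i = 0 then (0:ℂ) else 1) := by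
    ext i j
    have e : (Wᴴ * W) i j = star (w i) ⬝ᵥ w j := by
      simp [Matrix.mul_apply, Matrix.conjTranspose_apply, dotProduct, hWdef]
    rw [e, hwdef]
    simp only [star_smul, smul_dotProduct, dotProduct_smul, hvv i j, smul_eq_mul,
      RCLike.star_def, Complex.conj_ofReal]
    rw [Matrix.diagonal_apply]
    by_cases hij : i = j
    · subst hij
      simp only [if_pos rfl]
      by_cases hi : μ i = 0
      · simp [hcdef, hi]
      · rw [hcdef]
        simp only [if_neg hi]
        rw [show ((μ i : ℝ) : ℂ) = ((Real.sqrt (μ i) : ℝ) : ℂ) * ((Real.sqrt (μ i) : ℝ) : ℂ) by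
          exact_mod_cast (Real.mul_self_sqrt (hμ0 i)).symm]
        have hs : ((Real.sqrt (μ i) : ℝ) : ℂ) ≠ 0 := by
          norm_cast
          exact (Real.sqrt_pos.mpr (lt_of_le_of_ne (hμ0 i) (Ne.symm hi))).ne'
        simp only [if_true]
        push_cast
        field_simp
    · simp [hij]
  have hWd : W * Matrix.diagonal (fun i => if μ i = 0 then (0:ℂ) else 1) = W := by
    ext k i
    rw [Matrix.mul_diagonal]
    by_cases hi : μ i = 0
    · simp [hWdef, hi, hw0 i hi]
    · simp [hi]
  have hP2 : P * P = P := by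
    rw [hPdef]
    calc W * Wᴴ * (W * Wᴴ) = W * (Wᴴ * W) * Wᴴ := by simp only [Matrix.mul_assoc]
      _ = W * Wᴴ := by rw [hWW, hWd]
  have hPH : Pᴴ = P := by
    rw [hPdef, Matrix.conjTranspose_mul, Matrix.conjTranspose_conjTranspose]
  have hIP : (1 - P).PosSemidef := by
    have e : (1 - P)ᴴ * (1 - P) = 1 - P := by
      rw [Matrix.conjTranspose_sub, Matrix.conjTranspose_one, hPH, Matrix.mul_sub,
        Matrix.mul_one, Matrix.sub_mul, Matrix.one_mul, hP2, sub_self, sub_zero]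
    rw [← e]
    exact Matrix.posSemidef_conjTranspose_mul_self _
  have htrP : 0 ≤ (σ * (1 - P)).trace := by
    have e : (hσ.sqrt * (1 - P) * hσ.sqrt).trace = (σ * (1 - P)).trace := by
      rw [Matrix.trace_mul_cycle, hσ.sqrt_mul_self]
    rw [← e]
    have hpsd : (hσ.sqrt * (1 - P) * hσ.sqrtᴴ).PosSemidef :=
      hIP.mul_mul_conjTranspose_same hσ.sqrt
    rw [hσ.posSemidef_sqrt.1] at hpsd
    exact aux_trace_nonneg hpsd
  have hSpσ : ((Sp : ℝ) : ℂ) ≤ σ.trace := by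
    have e1 : (Wᴴ * σ * W).trace = (σ * P).trace := by
      rw [Matrix.trace_mul_cycle, ← hPdef, Matrix.trace_mul_comm]
    have e2 : (σ * (1 - P)).trace = σ.trace - (σ * P).trace := by
      rw [Matrix.mul_sub, Matrix.mul_one, Matrix.trace_sub]
    rw [hTp, e1]
    rw [e2] at htrP
    exact sub_nonneg.mp htrP
  -- final assembly
  have h0σ : 0 ≤ σ.trace := aux_trace_nonneg hσ
  have him : σ.trace.im = 0 := ((Complex.le_def.mp h0σ).2).symm
  have hre : σ.trace = ((σ.trace.re : ℝ) : ℂ) := by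
    apply Complex.ext <;> simp [him]
  rw [htr, ← hTq, hre]
  rw [hre] at hSpσ
  have hSple : Sp ≤ σ.trace.re := by exact_mod_cast hSpσ
  rw [← Complex.ofReal_pow, ← Complex.ofReal_mul]
  rw [Complex.real_le_real]
  calc (∑ i, Real.sqrt (μ i)) ^ 2 ≤ Sp * Sq := hCS
    _ ≤ σ.trace.re * Sq := mul_le_mul_of_nonneg_right hSple hSq0
    _ = Sq * σ.trace.re := mul_comm _ _
end

section
/- Let λ ∈ ℝ, let R_z ∈ ℝ^{p×p} and R_u ∈ ℝ^{q×q} be positive definite, and let Φ_f : ℝ → ℝ^{p×m}, Φ : ℝ → ℝ^{q×m}, z : ℝ → ℝ^p, u_f : ℝ → ℝ^p be continuous. Define A(t) and b(t) as differentiable functions satisfying A′(t) = -λ A(t) + Φ_f(t)ᵀ R_z Φ_f(t) + Φ(t)ᵀ R_u Φ(t) and b′(t) = -λ b(t) + Φ_f(t)ᵀ R_z (z(t) - u_f(t)), and suppose P : ℝ → ℝ^{m×m} is differentiable with P(t) A(t) = I for all t. Then θ(t) := -P(t) b(t) satisfies, for all t, θ′(t) = -P(t) Φ_f(t)ᵀ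 R_z (z(t) + Φ_f(t) θ(t) - u_f(t)) - P(t) Φ(t)ᵀ R_u Φ(t) θ(t). -/
open Matrix

attribute [local instance] Matrix.normedAddCommGroup Matrix.normedSpace

lemma hasDerivAt_mulVec' {m n : ℕ} {F : ℝ → Matrix (Fin m) (Fin n) ℝ}
    {g : ℝ → Fin n → ℝ} {F' : Matrix (Fin m) (Fin n) ℝ} {g' : Fin n → ℝ} {t : ℝ}
    (hF : HasDerivAt F F' t) (hg : HasDerivAt g g' t) :
    HasDerivAt (fun s => F s *ᵥ g s) (F' *ᵥ g t + F t *ᵥ g' ) t := by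
  rw [hasDerivAt_pi] at hg ⊢
  replace hF := hasDerivAt_pi.mp hF
  intro i
  have hFi := hF i
  rw [hasDerivAt_pi] at hFi
  simp only [mulVec, dotProduct, Pi.add_apply]
  exact (HasDerivAt.fun_sum (fun j _ => ((hFi j).mul (hg j)))).congr_deriv (by
    rw [Finset.sum_add_distrib])

lemma hasDerivAt_matmul' {m n k : ℕ} {F : ℝ → Matrix (Fin m) (Fin n) ℝ}
    {G : ℝ → Matrix (Fin n) (Fin k) ℝ} {F' G'} {t : ℝ}
    (hF : HasDerivAt F F' t) (hG : HasDerivAt G G' t) :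
    HasDerivAt (fun s => F s * G s) (F' * G t + F t * G') t := by
  replace hF := hasDerivAt_pi.mp hF
  refine hasDerivAt_pi.mpr ?_
  intro i
  rw [hasDerivAt_pi]
  intro j
  have hFi := hF i
  rw [hasDerivAt_pi] at hFi
  have hGj : ∀ l, HasDerivAt (fun s => G s l j) (G' l j) t := by
    intro l
    have := hasDerivAt_pi.mp hG l
    exact hasDerivAt_pi.mp this j
  simp only [Matrix.mul_apply, Pi.add_apply]
  exact (HasDerivAt.fun_sum (fun l _ => ((hFi l).mul (hGj l)))).congr_deriv (by
    simp [Matrix.mul_apply, Finset.sum_add_distrib])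

/-- Gain-update equation of continuous-time RCAC: with
`A′ = -λA + Φ_fᵀ R_z Φ_f + Φᵀ R_u Φ`, `b′ = -λb + Φ_fᵀ R_z (z - u_f)`, `P A = I`, and
`θ := -P b`, one has `θ′ = -P Φ_fᵀ R_z (z + Φ_f θ - u_f) - P Φᵀ R_u Φ θ`. -/
theorem rcac_gain_update {m p q : ℕ} (lam : ℝ)
    (Rz : Matrix (Fin p) (Fin p) ℝ) (Ru : Matrix (Fin q) (Fin q) ℝ)
    (hRz : Rz.PosDef) (hRu : Ru.PosDef)
    (Φf : ℝ → Matrix (Fin p) (Fin m) ℝ) (Φ : ℝ → Matrix (Fin q) (Fin m) ℝ)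
    (z uf : ℝ → Fin p → ℝ)
    (hΦf : Continuous Φf) (hΦ : Continuous Φ) (hz : Continuous z) (huf : Continuous uf)
    (A P P' : ℝ → Matrix (Fin m) (Fin m) ℝ) (b : ℝ → Fin m → ℝ)
    (hA : ∀ t, HasDerivAt A
      ((-lam) • A t + (Φf t)ᵀ * Rz * Φf t + (Φ t)ᵀ * Ru * Φ t) t)
    (hb : ∀ t, HasDerivAt b
      ((-lam) • b t + (Φf t)ᵀ *ᵥ (Rz *ᵥ (z t - uf t))) t)
    (hP : ∀ t, HasDerivAt P (P' t) t)
    (hPA : ∀ t, P t * A t = 1) :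
    ∀ t, HasDerivAt (fun s => -(P s *ᵥ b s))
      (-(P t *ᵥ ((Φf t)ᵀ *ᵥ (Rz *ᵥ (z t + Φf t *ᵥ (-(P t *ᵥ b t)) - uf t))))
        - P t *ᵥ ((Φ t)ᵀ *ᵥ (Ru *ᵥ (Φ t *ᵥ (-(P t *ᵥ b t)))))) t := by
  intro t
  set A' : Matrix (Fin m) (Fin m) ℝ :=
    (-lam) • A t + (Φf t)ᵀ * Rz * Φf t + (Φ t)ᵀ * Ru * Φ t with hA'def
  set b' : Fin m → ℝ := (-lam) • b t + (Φf t)ᵀ *ᵥ (Rz *ᵥ (z t - uf t)) with hb'def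
  have hderivPA : HasDerivAt (fun s => P s * A s) (P' t * A t + P t * A') t :=
    hasDerivAt_matmul' (hP t) (hA t)
  have hconst : HasDerivAt (fun s => P s * A s) 0 t := by
    have : (fun s : ℝ => P s * A s) = fun _ => (1 : Matrix (Fin m) (Fin m) ℝ) :=
      funext hPA
    rw [this]
    exact hasDerivAt_const t 1
  have hzero : P' t * A t + P t * A' = 0 := hderivPA.unique hconst
  have hAP : A t * P t = 1 := mul_eq_one_comm.mp (hPA t)
  have hP'eq : P' t = -(P t * A' * P t) := by
    have h2 := congrArg (· * P t) hzero
    simp only [add_mul, Matrix.zero_mul] at h2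
    rw [Matrix.mul_assoc (P' t), hAP, Matrix.mul_one] at h2
    have := eq_neg_of_add_eq_zero_left h2
    rw [this, Matrix.mul_assoc]
  have hmain : HasDerivAt (fun s => -(P s *ᵥ b s)) (-(P' t *ᵥ b t + P t *ᵥ b')) t :=
    (hasDerivAt_mulVec' (hP t) (hb t)).neg
  have hPAv : ∀ v : Fin m → ℝ, P t *ᵥ (A t *ᵥ v) = v := fun v => by
    rw [Matrix.mulVec_mulVec, hPA, Matrix.one_mulVec]
  refine hmain.congr_deriv ?_
  rw [hP'eq, hA'def, hb'def]
  simp only [Matrix.add_mulVec, Matrix.neg_mulVec, Matrix.mulVec_add, Matrix.mulVec_sub,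
    Matrix.mulVec_neg, Matrix.smul_mulVec, Matrix.mulVec_smul,
    ← Matrix.mulVec_mulVec, hPAv, Matrix.sub_mulVec]
  module
end
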